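/- Let k be a field and let q, m be positive integers with gcd(q,m) = 1. Put a_i = 2q+1+(i−1)m for i = 1,2,3, and let p(a) ⊆ k[X_1,X_2,X_3] be the kernel of the k-algebra homomorphism sending X_i to T^{a_i}. Then there exist two polynomials f, g ∈ p(a) such that √(f,g) = p(a). -/

import Mathlib

open MvPolynomial

section Aux

variable {k : Type*} [Field k]

def vallaDeg (a : Fin 3 → ℕ) (u : Fin 3 →₀ ℕ) : ℕ := ∑ i, a i * u i

lemma valla_aeval_monomial (a : Fin 3 → ℕ) (u : Fin 3 →₀ ℕ) (c : k) :
    MvPolynomial.aeval (R := k) (fun i => (Polynomial.X : Polynomial k) ^ a i)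
        (monomial u c)
      = Polynomial.C c * Polynomial.X ^ (vallaDeg a u) := by
  rw [aeval_monomial, Finsupp.prod_fintype _ _ (fun i => pow_zero _)]
  rw [Polynomial.algebraMap_eq]
  congr 1
  rw [vallaDeg, ← Finset.prod_pow_eq_pow_sum]
  exact Finset.prod_congr rfl fun i _ => by rw [← pow_mul]

lemma valla_binomial_mem_ker (a : Fin 3 → ℕ) (u v : Fin 3 →₀ ℕ)
    (h : vallaDeg a u = vallaDeg a v) :
    (monomial u (1 : k)) - monomial v 1 ∈
      RingHom.ker (MvPolynomial.aeval (R := k)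
        fun i => (Polynomial.X : Polynomial k) ^ a i) := by
  rw [RingHom.mem_ker, map_sub, valla_aeval_monomial, valla_aeval_monomial, h, sub_self]

lemma valla_coeff_aeval (a : Fin 3 → ℕ) (h : MvPolynomial (Fin 3) k) (N : ℕ) :
    (MvPolynomial.aeval (R := k) (fun i => (Polynomial.X : Polynomial k) ^ a i) h).coeff N
      = ∑ u ∈ h.support, if vallaDeg a u = N then h.coeff u else 0 := by
  conv_lhs => rw [h.as_sum, map_sum]
  rw [Polynomial.finset_sum_coeff]
  refine Finset.sum_congr rfl fun u _ => ?_
  rw [valla_aeval_monomial, Polynomial.coeff_C_mul, Polynomial.coeff_X_pow]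
  by_cases hd : vallaDeg a u = N <;> simp [hd]
  · intro h'; exact (hd h'.symm).elim

lemma valla_ker_le (a : Fin 3 → ℕ) (P : Ideal (MvPolynomial (Fin 3) k))
    (hbin : ∀ u v : Fin 3 →₀ ℕ, vallaDeg a u = vallaDeg a v →
      (monomial u (1 : k)) - monomial v 1 ∈ P) :
    RingHom.ker (MvPolynomial.aeval (R := k)
      fun i => (Polynomial.X : Polynomial k) ^ a i) ≤ P := by
  intro h hker
  generalize hn : h.support.card = N
  induction N using Nat.strong_induction_on generalizing h with
  | _ N IH =>
    rcases eq_or_ne h 0 with rfl | hne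
    · exact P.zero_mem
    · -- pick u in support
      obtain ⟨u, hu⟩ := Finset.nonempty_iff_ne_empty.mpr
        (fun he => hne (MvPolynomial.support_eq_empty.mp he))
      -- find v ≠ u in support of equal degree
      have hco : (MvPolynomial.aeval (R := k)
          (fun i => (Polynomial.X : Polynomial k) ^ a i) h).coeff (vallaDeg a u) = 0 := by
        rw [RingHom.mem_ker] at hker; rw [hker, Polynomial.coeff_zero]
      rw [valla_coeff_aeval] at hco
      have hex : ∃ v ∈ h.support, v ≠ u ∧ vallaDeg a v = vallaDeg a u := by
        by_contra hxe
        push_neg at hxe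
        rw [Finset.sum_eq_single u (fun b hb hbu => by
          rcases eq_or_ne (vallaDeg a b) (vallaDeg a u) with hd | hd
          · exact absurd hd (hxe b hb hbu)
          · simp [hd]) (fun hus => absurd hu hus)] at hco
        simp only [if_pos rfl] at hco
        exact (MvPolynomial.mem_support_iff.mp hu) hco
      obtain ⟨v, hv, hvu, hdeg⟩ := hex
      set c := h.coeff u with hc
      set b : MvPolynomial (Fin 3) k := (monomial u (1:k)) - monomial v 1 with hb
      set h' := h - C c * b with hh'
      have hbker : b ∈ RingHom.ker (MvPolynomial.aeval (R := k)
          fun i => (Polynomial.X : Polynomial k) ^ a i) :=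
        valla_binomial_mem_ker a u v hdeg.symm
      have hh'ker : h' ∈ RingHom.ker (MvPolynomial.aeval (R := k)
          fun i => (Polynomial.X : Polynomial k) ^ a i) := by
        rw [RingHom.mem_ker] at hker hbker ⊢
        rw [hh', map_sub, map_mul, hbker, hker, mul_zero, sub_zero]
      have hcoeff : ∀ w, h'.coeff w = h.coeff w - (if u = w then c else 0)
          + (if v = w then c else 0) := by
        intro w
        rw [hh', hb]
        simp only [MvPolynomial.coeff_sub, MvPolynomial.coeff_C_mul,
          MvPolynomial.coeff_monomial, mul_sub, mul_ite, mul_one, mul_zero]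
        ring
      have hsup : h'.support ⊆ h.support.erase u := by
        intro w hw
        rw [MvPolynomial.mem_support_iff] at hw
        rw [Finset.mem_erase, MvPolynomial.mem_support_iff]
        constructor
        · rintro rfl
          apply hw
          rw [hcoeff _, if_pos rfl, if_neg hvu, add_zero, hc, sub_self]
        · intro h0
          apply hw
          have huw : u ≠ w := by rintro rfl; exact hw (by
            rw [hcoeff _, if_pos rfl, if_neg hvu, add_zero, hc, sub_self])
          have hvw : v ≠ w := by rintro rfl; exact (MvPolynomial.mem_support_iff.mp hv) h0
          rw [hcoeff w, if_neg huw, if_neg hvw, h0, sub_zero, add_zero]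
      have hcard : h'.support.card < N := by
        calc h'.support.card ≤ (h.support.erase u).card := Finset.card_le_card hsup
        _ < h.support.card := Finset.card_erase_lt_of_mem hu
        _ = N := hn
      have hmem : h' ∈ P := IH _ hcard hh'ker rfl
      have : h = h' + C c * b := by rw [hh']; ring
      rw [this]
      exact P.add_mem hmem (Ideal.mul_mem_left _ _ (hbin u v hdeg.symm))


lemma valla_pow_rel {K : Type*} [Field K] (y s : K) (hy : y ≠ 0) (hs : s ≠ 0)
    (n' m' : ℕ) (hm' : 0 < m') (hrel : s ^ n' = y ^ m') (hcop : Nat.Coprime n' m')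
    (Su Tu Sv Tv : ℕ) (hdeg : n' * Su + m' * Tu = n' * Sv + m' * Tv) :
    y ^ Su * s ^ Tu = y ^ Sv * s ^ Tv := by
  have h1 : (n' : ℤ) * ((Su : ℤ) - Sv) = (m' : ℤ) * ((Tv : ℤ) - Tu) := by
    have := hdeg
    zify at this
    linarith
  have hcopz : IsCoprime (m' : ℤ) (n' : ℤ) := by
    rw [Int.isCoprime_iff_gcd_eq_one, Int.gcd_natCast_natCast]
    exact hcop.symm
  have hdvd : (m' : ℤ) ∣ ((Su : ℤ) - Sv) := by
    refine hcopz.dvd_of_dvd_mul_left ?_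
    exact ⟨(Tv : ℤ) - Tu, by linarith⟩
  obtain ⟨t, ht⟩ := hdvd
  have ht2 : (Tv : ℤ) - Tu = (n' : ℤ) * t := by
    have hm'z : (m' : ℤ) ≠ 0 := by exact_mod_cast hm'.ne'
    apply mul_left_cancel₀ hm'z
    rw [← h1, ht]; ring
  have key : y ^ (Su : ℤ) * s ^ (Tu : ℤ) = y ^ (Sv : ℤ) * s ^ (Tv : ℤ) := by
    have e1 : (Su : ℤ) = (Sv : ℤ) + (m' : ℤ) * t := by linarith
    have e2 : (Tv : ℤ) = (Tu : ℤ) + (n' : ℤ) * t := by linarith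
    have h3 : (s ^ t) ^ (n' : ℤ) = (y ^ t) ^ (m' : ℤ) := by
      rw [← zpow_mul, ← zpow_mul, mul_comm t ((n' : ℤ)), mul_comm t ((m' : ℤ)),
        zpow_mul, zpow_mul, zpow_natCast, zpow_natCast, hrel]
    rw [e1, e2, zpow_add₀ hy, zpow_add₀ hs, mul_comm ((m' : ℤ)) t,
      mul_comm ((n' : ℤ)) t, zpow_mul, zpow_mul, h3]
    ring
  simpa [zpow_natCast] using key

set_option maxHeartbeats 1000000 in
set_option synthInstance.maxHeartbeats 400000 in
lemma valla_binomial_mem_prime (k : Type*) [Field k] (n m dd n' m' : ℕ)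
    (hnpos : 0 < n) (hn'pos : 0 < n') (hm'pos : 0 < m')
    (hn2 : dd * n' = n) (hm2 : dd * m' = m) (hdpos : 0 < dd)
    (hcop : Nat.Coprime n' m')
    (P : Ideal (MvPolynomial (Fin 3) k)) (hP : P.IsPrime)
    (hfP : (X 0 * X 2 - X 1 ^ 2 : MvPolynomial (Fin 3) k) ∈ P)
    (hgP : (X 2 ^ n' + X 0 ^ (n' + 2*m') - 2 * (X 0 ^ m' * X 1 ^ n') :
      MvPolynomial (Fin 3) k) ∈ P)
    (u v : Fin 3 →₀ ℕ)
    (hdu : n * (u 0 + u 1 + u 2) + m * (u 1 + 2 * u 2)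
         = n * (v 0 + v 1 + v 2) + m * (v 1 + 2 * v 2)) :
    (monomial u (1 : k)) - monomial v 1 ∈ P := by
  haveI := hP
  set π := Ideal.Quotient.mk P with hπ
  rw [← Ideal.Quotient.eq_zero_iff_mem, map_sub, sub_eq_zero]
  have hmono : ∀ w : Fin 3 →₀ ℕ, π (monomial w (1:k))
      = π (X 0) ^ w 0 * π (X 1) ^ w 1 * π (X 2) ^ w 2 := by
    intro w
    rw [monomial_eq, Finsupp.prod_fintype _ _ (fun i => pow_zero _), Fin.prod_univ_three]
    simp [map_mul, map_pow]
  rw [hmono u, hmono v]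
  set x0 := π (X 0) with hx0def
  set x1 := π (X 1) with hx1def
  set x2 := π (X 2) with hx2def
  have hf0 : x0 * x2 = x1 ^ 2 := by
    have h := Ideal.Quotient.eq_zero_iff_mem.mpr hfP
    rw [map_sub, map_mul, map_pow, sub_eq_zero] at h
    exact h
  have hg0 : x2 ^ n' + x0 ^ (n' + 2*m') - 2 * (x0 ^ m' * x1 ^ n') = 0 := by
    have h := Ideal.Quotient.eq_zero_iff_mem.mpr hgP
    simpa [map_add, map_sub, map_mul, map_pow, map_ofNat] using h
  by_cases hx0 : x0 = 0
  · -- all coordinates vanish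
    have hx1 : x1 = 0 := by
      have h := hf0
      rw [hx0, zero_mul] at h
      exact (pow_eq_zero_iff two_ne_zero).mp h.symm
    have hx2 : x2 = 0 := by
      have h := hg0
      rw [hx0, hx1, zero_pow hm'pos.ne', zero_pow (show n' + 2*m' ≠ 0 by omega)] at h
      simp only [zero_mul, mul_zero, add_zero, sub_zero] at h
      exact pow_eq_zero_iff hn'pos.ne' |>.mp h
    rw [hx0, hx1, hx2]
    have hzero : ∀ e1 e2 e3 : ℕ, 0 < e1 + e2 + e3 →
        (0 : MvPolynomial (Fin 3) k ⧸ P) ^ e1 * 0 ^ e2 * 0 ^ e3 = 0 := by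
      intro e1 e2 e3 h
      obtain h | h | h : 0 < e1 ∨ 0 < e2 ∨ 0 < e3 := by omega
      all_goals simp [zero_pow h.ne']
    rcases Nat.eq_zero_or_pos (u 0 + u 1 + u 2) with h0 | h0
    · have hu0 : u 0 = 0 ∧ u 1 = 0 ∧ u 2 = 0 := by omega
      have hv0 : v 0 + v 1 + v 2 = 0 := by
        by_contra hv
        have h1 : n * (u 0 + u 1 + u 2) + m * (u 1 + 2 * u 2) = 0 := by
          obtain ⟨e1, e2, e3⟩ := hu0; rw [e1, e2, e3]; simp
        rw [h1] at hdu
        have : 0 < n * (v 0 + v 1 + v 2) := Nat.mul_pos hnpos (by omega)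
        omega
      have hv0' : v 0 = 0 ∧ v 1 = 0 ∧ v 2 = 0 := by omega
      obtain ⟨e1, e2, e3⟩ := hu0
      obtain ⟨f1, f2, f3⟩ := hv0'
      rw [e1, e2, e3, f1, f2, f3]
    · have hv0 : 0 < v 0 + v 1 + v 2 := by
        by_contra hv
        push_neg at hv
        have hv0' : v 0 = 0 ∧ v 1 = 0 ∧ v 2 = 0 := by omega
        obtain ⟨f1, f2, f3⟩ := hv0'
        rw [f1, f2, f3] at hdu
        simp only [add_zero, mul_zero] at hdu
        have : 0 < n * (u 0 + u 1 + u 2) := Nat.mul_pos hnpos h0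
        omega
      rw [hzero _ _ _ h0, hzero _ _ _ hv0]
  · -- x0 ≠ 0 : all coordinates nonzero
    have hx1 : x1 ≠ 0 := by
      intro h1
      apply hx0
      have h2 : x2 = 0 := by
        have h := hf0
        rw [h1] at h
        rcases mul_eq_zero.mp (by rw [h]; ring) with h' | h'
        · exact absurd h' hx0
        · exact h'
      have h := hg0
      rw [h1, h2, zero_pow hn'pos.ne'] at h
      simp only [mul_zero, zero_add, sub_zero] at h
      exact pow_eq_zero_iff (show n' + 2*m' ≠ 0 by omega) |>.mp h
    have hx2 : x2 ≠ 0 := by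
      intro h2
      apply hx1
      have h := hf0
      rw [h2, mul_zero] at h
      exact (pow_eq_zero_iff two_ne_zero).mp h.symm
    have hkey : x1 ^ n' = x0 ^ (n' + m') := by
      have e : x0 ^ n' * x2 ^ n' = x1 ^ (2 * n') := by
        rw [← mul_pow, hf0, ← pow_mul]
      have hsq : (x1 ^ n' - x0 ^ (n' + m')) ^ 2 = 0 := by
        linear_combination x0 ^ n' * hg0 - e
      exact sub_eq_zero.mp ((pow_eq_zero_iff two_ne_zero).mp hsq)
    -- move to fraction field
    have hinj : Function.Injective
        (algebraMap (MvPolynomial (Fin 3) k ⧸ P) (FractionRing (MvPolynomial (Fin 3) k ⧸ P))) :=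
      IsFractionRing.injective _ _
    apply hinj
    simp only [map_mul, map_pow]
    obtain ⟨y0, hy0def⟩ : ∃ y, y = algebraMap _ (FractionRing (MvPolynomial (Fin 3) k ⧸ P)) x0 :=
      ⟨_, rfl⟩
    obtain ⟨y1, hy1def⟩ : ∃ y, y = algebraMap _ (FractionRing (MvPolynomial (Fin 3) k ⧸ P)) x1 :=
      ⟨_, rfl⟩
    obtain ⟨y2, hy2def⟩ : ∃ y, y = algebraMap _ (FractionRing (MvPolynomial (Fin 3) k ⧸ P)) x2 :=
      ⟨_, rfl⟩
    rw [← hy0def, ← hy1def, ← hy2def]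
    have hy0 : y0 ≠ 0 := fun h => hx0 (hinj (by rw [← hy0def, h, map_zero]))
    have hy1 : y1 ≠ 0 := fun h => hx1 (hinj (by rw [← hy1def, h, map_zero]))
    have hfK : y0 * y2 = y1 ^ 2 := by
      rw [hy0def, hy1def, hy2def, ← map_mul, ← map_pow, hf0]
    have hkeyK : y1 ^ n' = y0 ^ (n' + m') := by
      rw [hy0def, hy1def]
      exact (map_pow _ _ _).symm.trans ((congrArg _ hkey).trans (map_pow _ _ _))
    obtain ⟨s, hsdef⟩ : ∃ s, s = y1 / y0 := ⟨_, rfl⟩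
    have hs : s ≠ 0 := by rw [hsdef]; exact div_ne_zero hy1 hy0
    have hy1s : y1 = y0 * s := by rw [hsdef, mul_div_cancel₀ _ hy0]
    have hy2s : y2 = y0 * s ^ 2 := by
      apply mul_left_cancel₀ hy0
      rw [hfK, hy1s]; ring
    have hrel : s ^ n' = y0 ^ m' := by
      apply mul_left_cancel₀ (pow_ne_zero n' hy0)
      calc y0 ^ n' * s ^ n' = (y0 * s) ^ n' := (mul_pow _ _ _).symm
        _ = y0 ^ (n' + m') := by rw [← hy1s, hkeyK]
        _ = y0 ^ n' * y0 ^ m' := pow_add _ _ _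
    have hdeg' : n' * (u 0 + u 1 + u 2) + m' * (u 1 + 2 * u 2)
        = n' * (v 0 + v 1 + v 2) + m' * (v 1 + 2 * v 2) := by
      apply Nat.eq_of_mul_eq_mul_left hdpos
      calc dd * (n' * (u 0 + u 1 + u 2) + m' * (u 1 + 2 * u 2))
          = (dd * n') * (u 0 + u 1 + u 2) + (dd * m') * (u 1 + 2 * u 2) := by ring
        _ = (dd * n') * (v 0 + v 1 + v 2) + (dd * m') * (v 1 + 2 * v 2) := by
            rw [hn2, hm2]; exact hdu
        _ = dd * (n' * (v 0 + v 1 + v 2) + m' * (v 1 + 2 * v 2)) := by ring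
    have final := valla_pow_rel y0 s hy0 hs n' m' hm'pos hrel hcop _ _ _ _ hdeg'
    rw [hy1s, hy2s]
    linear_combination final

end Aux

/-- The prime ideal defining the monomial curve `C(a)`: the kernel of the `k`-algebra
map `k[X_1, …, X_d] → k[T]`, `X_i ↦ T^{a i}`. -/
noncomputable def monomialCurveIdeal (k : Type*) [Field k] {d : ℕ} (a : Fin d → ℕ) :
    Ideal (MvPolynomial (Fin d) k) :=
  RingHom.ker (MvPolynomial.aeval (R := k) fun i => (Polynomial.X : Polynomial k) ^ a i)

/-- **Valla (1980), Example 3.3.** For coprime positive integers `q, m` and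
`a_i = 2q + 1 + (i - 1)m`, `i = 1, 2, 3`, the monomial curve ideal `p(a)` is a
set-theoretic complete intersection. -/
theorem valla_stci (k : Type*) [Field k] (q m : ℕ) (hq : 0 < q) (hm : 0 < m)
    (hgcd : Nat.gcd q m = 1) :
    ∃ f g : MvPolynomial (Fin 3) k,
      f ∈ monomialCurveIdeal k (fun i : Fin 3 => 2 * q + 1 + i.val * m) ∧
      g ∈ monomialCurveIdeal k (fun i : Fin 3 => 2 * q + 1 + i.val * m) ∧
      (Ideal.span {f, g}).radical =
        monomialCurveIdeal k (fun i : Fin 3 => 2 * q + 1 + i.val * m) := by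
  obtain ⟨dd, hdd⟩ : ∃ d, d = Nat.gcd (2 * q + 1) m := ⟨_, rfl⟩
  obtain ⟨n', hn'⟩ : ∃ x, x = (2 * q + 1) / dd := ⟨_, rfl⟩
  obtain ⟨m', hm'⟩ : ∃ x, x = m / dd := ⟨_, rfl⟩
  have hnpos : 0 < 2 * q + 1 := by omega
  have hdpos : 0 < dd := hdd ▸ Nat.gcd_pos_of_pos_left m hnpos
  have hn2 : dd * n' = 2 * q + 1 := by
    rw [hn', hdd]; exact Nat.mul_div_cancel' (Nat.gcd_dvd_left _ m)
  have hm2 : dd * m' = m := by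
    rw [hm', hdd]; exact Nat.mul_div_cancel' (Nat.gcd_dvd_right _ m)
  have hn'pos : 0 < n' := by
    rcases Nat.eq_zero_or_pos n' with h | h
    · rw [h, mul_zero] at hn2; omega
    · exact h
  have hm'pos : 0 < m' := by
    rcases Nat.eq_zero_or_pos m' with h | h
    · rw [h, mul_zero] at hm2; omega
    · exact h
  have hcop : Nat.Coprime n' m' := by
    rw [hn', hm', hdd]
    exact Nat.coprime_div_gcd_div_gcd (hdd ▸ hdpos)
  have E1 : (2 * q + 1 + 2 * m) * n' = (2 * q + 1) * (n' + 2 * m') := by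
    rw [← hn2, ← hm2]; ring
  have E2 : (2 * q + 1) * m' + (2 * q + 1 + m) * n' = (2 * q + 1) * (n' + 2 * m') := by
    rw [← hn2, ← hm2]; ring
  refine ⟨X 0 * X 2 - X 1 ^ 2,
    X 2 ^ n' + X 0 ^ (n' + 2 * m') - 2 * (X 0 ^ m' * X 1 ^ n'), ?_, ?_, ?_⟩
  · rw [monomialCurveIdeal, RingHom.mem_ker]
    simp only [map_sub, map_mul, map_pow, aeval_X]
    rw [sub_eq_zero, ← pow_add, ← pow_mul]
    norm_num
    congr 1
    ring
  · rw [monomialCurveIdeal, RingHom.mem_ker]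
    simp only [map_sub, map_add, map_mul, map_pow, aeval_X, map_ofNat]
    rw [← pow_mul, ← pow_mul, ← pow_mul, ← pow_mul, ← pow_add]
    norm_num
    rw [E1, E2]
    ring
  · apply le_antisymm
    · have hle : Ideal.span {(X 0 * X 2 - X 1 ^ 2 : MvPolynomial (Fin 3) k),
          X 2 ^ n' + X 0 ^ (n' + 2 * m') - 2 * (X 0 ^ m' * X 1 ^ n')}
          ≤ monomialCurveIdeal k (fun i : Fin 3 => 2 * q + 1 + i.val * m) := by
        rw [Ideal.span_le]
        rintro x hx
        simp only [Set.mem_insert_iff, Set.mem_singleton_iff] at hx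
        rcases hx with rfl | rfl
        · rw [SetLike.mem_coe, monomialCurveIdeal, RingHom.mem_ker]
          simp only [map_sub, map_mul, map_pow, aeval_X]
          rw [sub_eq_zero, ← pow_add, ← pow_mul]
          norm_num
          congr 1
          ring
        · rw [SetLike.mem_coe, monomialCurveIdeal, RingHom.mem_ker]
          simp only [map_sub, map_add, map_mul, map_pow, aeval_X, map_ofNat]
          rw [← pow_mul, ← pow_mul, ← pow_mul, ← pow_mul, ← pow_add]
          norm_num
          rw [E1, E2]
          ring
      have hpr : (monomialCurveIdeal k (fun i : Fin 3 => 2 * q + 1 + i.val * m)).IsPrime := RingHom.ker_isPrime _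
      calc (Ideal.span _).radical ≤ (monomialCurveIdeal k (fun i : Fin 3 => 2 * q + 1 + i.val * m)).radical :=
            Ideal.radical_mono hle
        _ = monomialCurveIdeal k (fun i : Fin 3 => 2 * q + 1 + i.val * m) := hpr.radical
    · rw [Ideal.radical_eq_sInf]
      refine le_sInf ?_
      rintro P ⟨hleP, hP⟩
      have hfP : (X 0 * X 2 - X 1 ^ 2 : MvPolynomial (Fin 3) k) ∈ P :=
        hleP (Ideal.subset_span (Set.mem_insert _ _))
      have hgP : (X 2 ^ n' + X 0 ^ (n' + 2 * m') - 2 * (X 0 ^ m' * X 1 ^ n') :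
          MvPolynomial (Fin 3) k) ∈ P :=
        hleP (Ideal.subset_span (Set.mem_insert_of_mem _ rfl))
      refine valla_ker_le (fun i : Fin 3 => 2 * q + 1 + i.val * m) P ?_
      intro u v huv
      have hexp : ∀ w : Fin 3 →₀ ℕ, vallaDeg (fun i : Fin 3 => 2 * q + 1 + i.val * m) w
          = (2 * q + 1) * (w 0 + w 1 + w 2) + m * (w 1 + 2 * w 2) := by
        intro w
        simp [vallaDeg, Fin.sum_univ_three]
        ring
      refine valla_binomial_mem_prime k (2 * q + 1) m dd n' m' hnpos hn'pos hm'pos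
        hn2 hm2 hdpos hcop P hP hfP hgP u v ?_
      rw [← hexp u, ← hexp v]
      exact huv
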